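/- For real numbers r, s, t, the Goursat equation 4(2s − t²)³ + (3r − 6st + 2t³)² = 0 holds if and only if there exist λ, μ ∈ ℝ such that r = λ³/3 + λ²μ, s = λ²/2 + λμ, and t = λ + μ. -/
import Mathlib

/-- The locus of the Goursat equation `4(2s − t²)³ + (3r − 6st + 2t³)² = 0` in
`(r,s,t)`-space is exactly the two-dimensional tangent cone `ρ(λ) + μ·ρ′(λ)` to
the twisted cubic `ρ(λ) = (λ³/3, λ²/2, λ)`. -/
theorem goursat_equation_iff_tangent_cone (r s t : ℝ) :
    4 * (2 * s - t ^ 2) ^ 3 + (3 * r - 6 * s * t + 2 * t ^ 3) ^ 2 = 0 ↔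
    ∃ l μ : ℝ, r = l ^ 3 / 3 + l ^ 2 * μ ∧ s = l ^ 2 / 2 + l * μ ∧ t = l + μ := by
  constructor
  · intro h
    have hAle : 0 ≤ t ^ 2 - 2 * s := by
      by_contra hx
      push_neg at hx
      have h1 : 0 < 2 * s - t ^ 2 := by linarith
      nlinarith [pow_pos h1 3, sq_nonneg (3 * r - 6 * s * t + 2 * t ^ 3)]
    set a := Real.sqrt (t ^ 2 - 2 * s) with ha
    have ha2 : a ^ 2 = t ^ 2 - 2 * s := Real.sq_sqrt hAle
    have hB2 : (3 * r - 6 * s * t + 2 * t ^ 3) ^ 2 = (2 * a ^ 3) ^ 2 := by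
      linear_combination h + (-4 * (a ^ 4 - a ^ 2 * (2 * s - t ^ 2) +
        (2 * s - t ^ 2) ^ 2)) * ha2 + (4 * (a ^ 4 - a ^ 2 * (2 * s - t ^ 2) +
        (2 * s - t ^ 2) ^ 2)) * (ha2.symm.trans ha2)
    have hcases : 3 * r - 6 * s * t + 2 * t ^ 3 = 2 * a ^ 3 ∨
        3 * r - 6 * s * t + 2 * t ^ 3 = -(2 * a ^ 3) := sq_eq_sq_iff_eq_or_eq_neg.mp hB2
    rcases hcases with hBe | hBe
    · exact ⟨t - a, a, by linear_combination (1/3) * hBe + t * ha2,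
        by linear_combination (1/2) * ha2, by ring⟩
    · exact ⟨t + a, -a, by linear_combination (1/3) * hBe + t * ha2,
        by linear_combination (1/2) * ha2, by ring⟩
  · rintro ⟨l, μ, hr, hs, ht⟩
    subst hr hs ht
    ring
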